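/- arXiv:1303.5908 — 5 statements merged into one kernel-verified Lean document; each statement's English description precedes it below -/
import Mathlib

section
/- Let B = [[b₁₁, −b₁₂], [−b₂₁, b₂₂]] with b₁₁, b₂₂ > 0 and b₁₂, b₂₁ ≥ 0, let σ₁, σ₂ > 0 and λ ∈ [0,∞)². Suppose v = (v₁, v₂) : [0,∞) → [0,∞)² is differentiable with v(0) = λ and satisfies v₁′(t) = −b₁₁v₁(t) + b₁₂v₂(t) − (σ₁²/2)v₁(t)² and v₂′(t) = b₂₁v₁(t) − b₂₂v₂(t) − (σ₂²/2)v₂(t)² for all t ≥ 0. Then for all t ≥ 0 and i ∈ {1,2}, v_i(t) ≤ (exp(−tB)·λ)_i, i.e. v is dominated componentwise by the solution u(t) = exp(−tB)·λ of the linear system u₁′ = −b₁₁u₁ + b₁₂u₂, u₂′ = b₂₁u₁ − b₂₂u₂ with u(0) = λ. -/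
open Matrix Set

open NormedSpace


attribute [local instance] Matrix.linftyOpNormedAddCommGroup Matrix.linftyOpNormedRing
  Matrix.linftyOpNormedAlgebra

noncomputable def mulVecL : Matrix (Fin 2) (Fin 2) ℝ →L[ℝ] (Fin 2 → ℝ) →L[ℝ] (Fin 2 → ℝ) :=
  LinearMap.toContinuousLinearMap
    ((LinearMap.toContinuousLinearMap :
        ((Fin 2 → ℝ) →ₗ[ℝ] (Fin 2 → ℝ)) ≃ₗ[ℝ] ((Fin 2 → ℝ) →L[ℝ] (Fin 2 → ℝ))).toLinearMap
      ∘ₗ (Matrix.toLin' : Matrix (Fin 2) (Fin 2) ℝ ≃ₗ[ℝ] _).toLinearMap)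

@[simp] lemma mulVecL_apply (M : Matrix (Fin 2) (Fin 2) ℝ) (x : Fin 2 → ℝ) :
    mulVecL M x = M.mulVec x := by
  simp [mulVecL, Matrix.toLin'_apply]

noncomputable def entryCLM (i j : Fin 2) : Matrix (Fin 2) (Fin 2) ℝ →L[ℝ] ℝ :=
  LinearMap.toContinuousLinearMap
    { toFun := fun M => M i j
      map_add' := fun _ _ => rfl
      map_smul' := fun _ _ => rfl }

@[simp] lemma entryCLM_apply (i j : Fin 2) (M : Matrix (Fin 2) (Fin 2) ℝ) :
    entryCLM i j M = M i j := by simp [entryCLM]; rfl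

lemma entry_exp_nonneg (A : Matrix (Fin 2) (Fin 2) ℝ) (hA : ∀ i j, 0 ≤ A i j) (i j : Fin 2) :
    0 ≤ exp A i j := by
  have hpow : ∀ n : ℕ, ∀ i j : Fin 2, 0 ≤ (A ^ n) i j := by
    intro n
    induction n with
    | zero =>
      intro i j
      rw [pow_zero, Matrix.one_apply]
      split <;> norm_num
    | succ n ih =>
      intro i j
      rw [pow_succ, Matrix.mul_apply]
      exact Finset.sum_nonneg fun k _ => mul_nonneg (ih i k) (hA k j)
  have hs : Summable fun n : ℕ => ((n.factorial : ℝ)⁻¹) • A ^ n := expSeries_summable' (𝕂 := ℝ) A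
  have h1 : exp A i j = ∑' n : ℕ, ((n.factorial : ℝ)⁻¹) • (A ^ n) i j := by
    have := (entryCLM i j).map_tsum hs
    simp only [entryCLM_apply] at this
    rw [exp_eq_tsum ℝ]
    simp only [Matrix.smul_apply] at this
    exact this
  rw [h1]
  refine tsum_nonneg fun n => ?_
  have : (0:ℝ) ≤ ((n.factorial : ℝ)⁻¹) := by positivity
  exact smul_nonneg this (hpow n i j)

lemma exp_metzler_nonneg (M : Matrix (Fin 2) (Fin 2) ℝ) (h01 : 0 ≤ M 0 1) (h10 : 0 ≤ M 1 0)
    (i j : Fin 2) : 0 ≤ exp M i j := by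
  set c : ℝ := max (-M 0 0) (-M 1 1) with hc
  have hkey : M = (M + c • 1) + (-c) • (1 : Matrix (Fin 2) (Fin 2) ℝ) := by
    rw [neg_smul]; abel
  have hcomm : Commute (M + c • (1 : Matrix (Fin 2) (Fin 2) ℝ)) ((-c) • 1) :=
    ((Commute.one_right _).smul_right _)
  have hent : ∀ i j : Fin 2, 0 ≤ (M + c • (1 : Matrix (Fin 2) (Fin 2) ℝ)) i j := by
    intro i j
    have h0 : -M 0 0 ≤ c := le_max_left _ _
    have h1 : -M 1 1 ≤ c := le_max_right _ _
    fin_cases i <;> fin_cases j <;>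
      simp [Matrix.add_apply, Matrix.smul_apply, Matrix.one_apply] <;> linarith
  rw [hkey, Matrix.exp_add_of_commute _ _ hcomm]
  have hsc : exp ((-c) • (1 : Matrix (Fin 2) (Fin 2) ℝ))
      = Matrix.diagonal (fun _ : Fin 2 => Real.exp (-c)) := by
    rw [Matrix.smul_one_eq_diagonal, Matrix.exp_diagonal, Real.exp_eq_exp_ℝ]
    exact congrArg _ (Pi.exp_def (𝔸 := fun _ : Fin 2 => ℝ) fun _ => -c)
  rw [hsc, Matrix.mul_diagonal]
  exact mul_nonneg (entry_exp_nonneg _ hent i j) (Real.exp_pos _).le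

lemma mulVec_exp_nonneg (b₁₁ b₁₂ b₂₁ b₂₂ : ℝ) (h12 : 0 ≤ b₁₂) (h21 : 0 ≤ b₂₁)
    (r : ℝ) (hr : 0 ≤ r) (x : Fin 2 → ℝ) (hx : ∀ j, 0 ≤ x j) (i : Fin 2) :
    0 ≤ (exp (r • (-(!![b₁₁, -b₁₂; -b₂₁, b₂₂] : Matrix (Fin 2) (Fin 2) ℝ)))).mulVec x i := by
  have hent : ∀ i j : Fin 2,
      0 ≤ exp (r • (-(!![b₁₁, -b₁₂; -b₂₁, b₂₂] : Matrix (Fin 2) (Fin 2) ℝ))) i j := by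
    refine fun i j => exp_metzler_nonneg _ ?_ ?_ i j
    · simp; positivity
    · simp; positivity
  rw [Matrix.mulVec]
  exact Finset.sum_nonneg fun k _ => mul_nonneg (hent i k) (hx k)

/-- Comparison of the Riccati-type system of a two-type CBI-process
with the associated linear system: the solution `v = (v₁, v₂)` of
`v₁' = -b₁₁v₁ + b₁₂v₂ - (σ₁²/2)v₁²`, `v₂' = b₂₁v₁ - b₂₂v₂ - (σ₂²/2)v₂²`
with `v(0) = λ ∈ [0,∞)²` is dominated componentwise by `u(t) = exp(-tB)·λ`. -/
theorem riccati_le_linear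
    (b₁₁ b₁₂ b₂₁ b₂₂ σ₁ σ₂ : ℝ)
    (h11 : 0 < b₁₁) (h22 : 0 < b₂₂) (h12 : 0 ≤ b₁₂) (h21 : 0 ≤ b₂₁)
    (hσ₁ : 0 < σ₁) (hσ₂ : 0 < σ₂)
    (lam : Fin 2 → ℝ) (hlam : 0 ≤ lam 0 ∧ 0 ≤ lam 1)
    (v₁ v₂ : ℝ → ℝ)
    (hv0 : v₁ 0 = lam 0 ∧ v₂ 0 = lam 1)
    (hnn : ∀ t : ℝ, 0 ≤ t → 0 ≤ v₁ t ∧ 0 ≤ v₂ t)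
    (hd1 : ∀ t : ℝ, 0 ≤ t → HasDerivWithinAt v₁
      (-b₁₁ * v₁ t + b₁₂ * v₂ t - σ₁ ^ 2 / 2 * (v₁ t) ^ 2) (Ici 0) t)
    (hd2 : ∀ t : ℝ, 0 ≤ t → HasDerivWithinAt v₂
      (b₂₁ * v₁ t - b₂₂ * v₂ t - σ₂ ^ 2 / 2 * (v₂ t) ^ 2) (Ici 0) t) :
    ∀ t : ℝ, 0 ≤ t →
      v₁ t ≤ (NormedSpace.exp (-(t • !![b₁₁, -b₁₂; -b₂₁, b₂₂]))).mulVec lam 0 ∧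
      v₂ t ≤ (NormedSpace.exp (-(t • !![b₁₁, -b₁₂; -b₂₁, b₂₂]))).mulVec lam 1 := by
  intro t ht
  set B : Matrix (Fin 2) (Fin 2) ℝ := !![b₁₁, -b₁₂; -b₂₁, b₂₂] with hB
  have hB00 : B 0 0 = b₁₁ := by simp [hB]
  have hB01 : B 0 1 = -b₁₂ := by simp [hB]
  have hB10 : B 1 0 = -b₂₁ := by simp [hB]
  have hB11 : B 1 1 = b₂₂ := by simp [hB]
  set v : ℝ → Fin 2 → ℝ := fun s => ![v₁ s, v₂ s] with hv
  set q : ℝ → Fin 2 → ℝ := fun s => ![σ₁ ^ 2 / 2 * (v₁ s) ^ 2, σ₂ ^ 2 / 2 * (v₂ s) ^ 2] with hq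
  set u : ℝ → Fin 2 → ℝ := fun s => (exp (s • (-B))).mulVec lam with hu
  set w : ℝ → Fin 2 → ℝ := fun s => u s - v s with hw
  set F : ℝ → Fin 2 → ℝ := fun s => (exp (s • B)).mulVec (w s) with hF
  set g : ℝ → Fin 2 → ℝ := fun s => (exp (s • B)).mulVec (q s) with hg
  -- derivative of u
  have hu' : ∀ s : ℝ, HasDerivAt u ((-B).mulVec (u s)) s := by
    intro s
    have h1 : HasDerivAt (fun r : ℝ => exp (r • (-B))) ((-B) * exp (s • (-B))) s :=
      hasDerivAt_exp_smul_const' (-B) s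
    have h2 := ((mulVecL.flip lam).hasFDerivAt).comp_hasDerivAt s h1
    simp only [ContinuousLinearMap.flip_apply, mulVecL_apply, Function.comp_def] at h2
    have heq : (-B) *ᵥ u s = ((-B) * exp (s • -B)) *ᵥ lam := by
      simp only [hu]
      rw [Matrix.mulVec_mulVec]
    rw [heq]
    exact h2
  -- derivative of v
  have hv' : ∀ s : ℝ, 0 ≤ s → HasDerivWithinAt v
      ![-b₁₁ * v₁ s + b₁₂ * v₂ s - σ₁ ^ 2 / 2 * (v₁ s) ^ 2,
        b₂₁ * v₁ s - b₂₂ * v₂ s - σ₂ ^ 2 / 2 * (v₂ s) ^ 2] (Ici 0) s := by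
    intro s hs
    rw [hasDerivWithinAt_pi]
    intro i
    fin_cases i
    · simpa [hv] using hd1 s hs
    · simpa [hv] using hd2 s hs
  -- derivative of w
  have hw' : ∀ s : ℝ, 0 ≤ s →
      HasDerivWithinAt w ((-B).mulVec (w s) + q s) (Ici 0) s := by
    intro s hs
    have := ((hu' s).hasDerivWithinAt).sub (hv' s hs)
    refine this.congr_deriv ?_
    funext i
    have e0 : v s 0 = v₁ s := rfl
    have e1 : v s 1 = v₂ s := rfl
    fin_cases i <;>
      simp [hw, Matrix.mulVec, dotProduct, Fin.sum_univ_two, Matrix.neg_apply,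
        hB00, hB01, hB10, hB11, hq, e0, e1] <;> ring
  -- derivative of F
  have hF' : ∀ s : ℝ, 0 ≤ s → HasDerivWithinAt F (g s) (Ici 0) s := by
    intro s hs
    have h1 : HasDerivAt (fun r : ℝ => exp (r • B)) (B * exp (s • B)) s :=
      hasDerivAt_exp_smul_const' B s
    have h2 := (mulVecL.hasFDerivAt).comp_hasDerivAt s h1
    have h3 := (h2.hasDerivWithinAt.clm_apply (hw' s hs))
    have hcomm : B * exp (s • B) = exp (s • B) * B :=
      (((Commute.refl B).smul_right s).exp_right).eq
    refine h3.congr_deriv ?_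
    simp only [mulVecL_apply, hg, Function.comp_apply]
    rw [hcomm, Matrix.mulVec_add, Matrix.mulVec_mulVec, mul_neg, Matrix.neg_mulVec]
    change (exp (s • B) * B) *ᵥ w s + _ = _
    abel
  -- continuity
  have hFcont : ContinuousOn F (Icc 0 t) :=
    fun s hs => ((hF' s hs.1).continuousWithinAt).mono Icc_subset_Ici_self
  have hv₁c : ContinuousOn v₁ (Ici 0) := fun s hs => (hd1 s hs).continuousWithinAt
  have hv₂c : ContinuousOn v₂ (Ici 0) := fun s hs => (hd2 s hs).continuousWithinAt
  have hexpc : Continuous fun s : ℝ => exp (s • B) := by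
    have : ∀ s : ℝ, HasDerivAt (fun r : ℝ => exp (r • B)) (B * exp (s • B)) s :=
      fun s => hasDerivAt_exp_smul_const' B s
    exact continuous_iff_continuousAt.2 fun s => (this s).continuousAt
  have hqcont : ContinuousOn q (Ici 0) := by
    rw [continuousOn_pi]
    intro i
    fin_cases i
    · simp [hq]; exact continuousOn_const.mul (hv₁c.pow 2)
    · simp [hq]; exact continuousOn_const.mul (hv₂c.pow 2)
  have hgcont : ContinuousOn g (Ici 0) := by
    have : ContinuousOn (fun s : ℝ => mulVecL (exp (s • B)) (q s)) (Ici 0) :=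
      ContinuousOn.clm_apply ((mulVecL.continuous.comp hexpc).continuousOn) hqcont
    simpa [hg] using this
  have hgint : IntervalIntegrable g MeasureTheory.volume 0 t :=
    (hgcont.mono (by rw [uIcc_of_le ht]; exact Icc_subset_Ici_self)).intervalIntegrable
  -- FTC
  have hFTC : ∫ s in (0:ℝ)..t, g s = F t - F 0 := by
    refine intervalIntegral.integral_eq_sub_of_hasDeriv_right_of_le ht hFcont
      (fun x hx => ((hF' x hx.1.le).mono (fun y hy => (hx.1.trans hy).le))) hgint
  -- F 0 = 0
  have hF0 : F 0 = 0 := by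
    have hu0 : u 0 = lam := by
      simp [hu, zero_smul, exp_zero, Matrix.one_mulVec]; ext i; fin_cases i <;> rfl
    have hv0' : v 0 = lam := by
      funext i
      fin_cases i
      · simpa [hv] using hv0.1
      · simpa [hv] using hv0.2
    simp [hF, hw, hu0, hv0', sub_self, Matrix.mulVec_zero]
  -- inverse relation
  have hinv : exp (t • (-B)) * exp (t • B) = 1 := by
    rw [← Matrix.exp_add_of_commute]
    · rw [smul_neg, neg_add_cancel, exp_zero]
    · rw [smul_neg]
      exact ((Commute.refl B).smul_left t).smul_right t |>.neg_left
  have hwt : ∀ i : Fin 2, w t i = (exp (t • (-B))).mulVec (F t) i := by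
    intro i
    rw [hF, Matrix.mulVec_mulVec, hinv, Matrix.one_mulVec]
  -- nonnegativity of w t
  have hwnn : ∀ i : Fin 2, 0 ≤ w t i := by
    intro i
    set φ : (Fin 2 → ℝ) →L[ℝ] ℝ :=
      (ContinuousLinearMap.proj i).comp (mulVecL (exp (t • (-B)))) with hφ
    have hφF : w t i = φ (F t) := by
      rw [hwt i]; simp [hφ]
    have hφint : φ (∫ s in (0:ℝ)..t, g s) = ∫ s in (0:ℝ)..t, φ (g s) :=
      (φ.intervalIntegral_comp_comm hgint).symm
    have : w t i = ∫ s in (0:ℝ)..t, φ (g s) := by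
      rw [hφF, ← hφint, hFTC, hF0, sub_zero]
    rw [this]
    refine intervalIntegral.integral_nonneg ht fun s hs => ?_
    have hφg : φ (g s) = (exp ((t - s) • (-B))).mulVec (q s) i := by
      simp only [hφ, ContinuousLinearMap.comp_apply, ContinuousLinearMap.proj_apply,
        mulVecL_apply, hg]
      rw [Matrix.mulVec_mulVec, ← Matrix.exp_add_of_commute]
      · congr 2
        rw [sub_smul, smul_neg, smul_neg]
        abel
      · show Commute (t • -B) (s • B)
        rw [smul_neg]
        exact (((Commute.refl B).smul_left t).smul_right s).neg_left
    rw [hφg]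
    refine mulVec_exp_nonneg b₁₁ b₁₂ b₂₁ b₂₂ h12 h21 (t - s) (by linarith [hs.2]) _ ?_ i
    intro j
    fin_cases j
    · simp [hq]; positivity
    · simp [hq]; positivity
  -- conclude
  have h0 := hwnn 0
  have h1 := hwnn 1
  have hts : t • (-B) = -(t • B) := smul_neg t B
  constructor
  · have : v₁ t ≤ u t 0 := by
      have : w t 0 = u t 0 - v₁ t := rfl
      linarith [h0, this ▸ h0]
    simpa [hu, hts] using this
  · have : v₂ t ≤ u t 1 := by
      have : w t 1 = u t 1 - v₂ t := rfl
      linarith [h1, this ▸ h1]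
    simpa [hu, hts] using this
end

section
/- Let B = [[b₁₁, −b₁₂], [−b₂₁, b₂₂]] with b₁₁, b₂₂ > 0, b₁₂, b₂₁ ≥ 0 and b₁₂·b₂₁ < b₁₁·b₂₂, let σ₁, σ₂ > 0, a₁, a₂ > 0 and λ ∈ [0,∞)². Suppose v = (v₁, v₂) : [0,∞) → [0,∞)² is differentiable with v(0) = λ and satisfies v₁′(t) = −b₁₁v₁(t) + b₁₂v₂(t) − (σ₁²/2)v₁(t)² and v₂′(t) = b₂₁v₁(t) − b₂₂v₂(t) − (σ₂²/2)v₂(t)² for all t ≥ 0. Then v_i(t) → 0 as t → ∞ for i = 1, 2, and the integral ∫₀^∞ (a₁v₁(s) + a₂v₂(s)) ds is finite. -/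
open Matrix Set Filter

set_option maxHeartbeats 1000000 in
/-- If moreover `b₁₂b₂₁ < b₁₁b₂₂` (both eigenvalues of `B`
positive) and `a₁, a₂ > 0`, then the solution `v = (v₁, v₂)` of the
Riccati-type system tends to `0` at infinity and
`∫₀^∞ (a₁v₁(s) + a₂v₂(s)) ds < ∞`. -/
theorem riccati_tendsto_zero_and_integrable
    (b₁₁ b₁₂ b₂₁ b₂₂ σ₁ σ₂ a₁ a₂ : ℝ)
    (h11 : 0 < b₁₁) (h22 : 0 < b₂₂) (h12 : 0 ≤ b₁₂) (h21 : 0 ≤ b₂₁)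
    (hκ : b₁₂ * b₂₁ < b₁₁ * b₂₂)
    (hσ₁ : 0 < σ₁) (hσ₂ : 0 < σ₂) (ha₁ : 0 < a₁) (ha₂ : 0 < a₂)
    (lam : Fin 2 → ℝ) (hlam : 0 ≤ lam 0 ∧ 0 ≤ lam 1)
    (v₁ v₂ : ℝ → ℝ)
    (hv0 : v₁ 0 = lam 0 ∧ v₂ 0 = lam 1)
    (hnn : ∀ t : ℝ, 0 ≤ t → 0 ≤ v₁ t ∧ 0 ≤ v₂ t)
    (hd1 : ∀ t : ℝ, 0 ≤ t → HasDerivWithinAt v₁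
      (-b₁₁ * v₁ t + b₁₂ * v₂ t - σ₁ ^ 2 / 2 * (v₁ t) ^ 2) (Ici 0) t)
    (hd2 : ∀ t : ℝ, 0 ≤ t → HasDerivWithinAt v₂
      (b₂₁ * v₁ t - b₂₂ * v₂ t - σ₂ ^ 2 / 2 * (v₂ t) ^ 2) (Ici 0) t) :
    Tendsto v₁ atTop (nhds 0) ∧ Tendsto v₂ atTop (nhds 0) ∧
      MeasureTheory.IntegrableOn (fun s => a₁ * v₁ s + a₂ * v₂ s) (Ici 0) := by
  -- choose positive weights `c₁, c₂` making `B` diagonally dominant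
  obtain ⟨c₁, c₂, hc₁, hc₂, hdom₁, hdom₂⟩ :
      ∃ c₁ c₂ : ℝ, 0 < c₁ ∧ 0 < c₂ ∧ c₂ * b₂₁ < c₁ * b₁₁ ∧ c₁ * b₁₂ < c₂ * b₂₂ := by
    have hden : (0:ℝ) < 2 * (b₂₁ + 1) := by linarith
    set q : ℝ := (b₁₁ * b₂₂ - b₁₂ * b₂₁) / (2 * (b₂₁ + 1)) with hqdef
    have hqpos : 0 < q := div_pos (by linarith) hden
    have hqeq : q * (2 * (b₂₁ + 1)) = b₁₁ * b₂₂ - b₁₂ * b₂₁ :=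
      div_mul_cancel₀ _ (ne_of_gt hden)
    refine ⟨b₂₂, b₁₂ + q, h22, by positivity, ?_, ?_⟩
    · nlinarith [hqpos, hqeq]
    · nlinarith [hqpos]
  -- choose the decay rate `δ`
  obtain ⟨δ, hδ, hδ1, hδ2⟩ :
      ∃ δ : ℝ, 0 < δ ∧ δ * c₁ ≤ c₁ * b₁₁ - c₂ * b₂₁ ∧ δ * c₂ ≤ c₂ * b₂₂ - c₁ * b₁₂ := by
    refine ⟨min ((c₁ * b₁₁ - c₂ * b₂₁) / c₁) ((c₂ * b₂₂ - c₁ * b₁₂) / c₂),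
      lt_min (div_pos (by linarith) hc₁) (div_pos (by linarith) hc₂),
      (le_div_iff₀ hc₁).mp (min_le_left _ _), (le_div_iff₀ hc₂).mp (min_le_right _ _)⟩
  -- the Lyapunov function `w = c₁ v₁ + c₂ v₂` and Grönwall's inequality
  have hw' : ∀ t ∈ Ici (0:ℝ), HasDerivWithinAt (fun s => c₁ * v₁ s + c₂ * v₂ s)
      (c₁ * (-b₁₁ * v₁ t + b₁₂ * v₂ t - σ₁ ^ 2 / 2 * (v₁ t) ^ 2)
        + c₂ * (b₂₁ * v₁ t - b₂₂ * v₂ t - σ₂ ^ 2 / 2 * (v₂ t) ^ 2)) (Ici 0) t :=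
    fun t ht => ((hd1 t ht).const_mul c₁).add ((hd2 t ht).const_mul c₂)
  have key : ∀ t : ℝ, 0 ≤ t →
      c₁ * v₁ t + c₂ * v₂ t ≤ (c₁ * v₁ 0 + c₂ * v₂ 0) * Real.exp (-δ * t) := by
    intro t ht
    have H := le_gronwallBound_of_liminf_deriv_right_le
      (f := fun s => c₁ * v₁ s + c₂ * v₂ s)
      (f' := fun s => c₁ * (-b₁₁ * v₁ s + b₁₂ * v₂ s - σ₁ ^ 2 / 2 * (v₁ s) ^ 2)
        + c₂ * (b₂₁ * v₁ s - b₂₂ * v₂ s - σ₂ ^ 2 / 2 * (v₂ s) ^ 2))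
      (δ := c₁ * v₁ 0 + c₂ * v₂ 0) (K := -δ) (ε := 0) (a := 0) (b := t)
      (fun s hs => ((hw' s hs.1).continuousWithinAt).mono Icc_subset_Ici_self)
      (fun x hx r hr =>
        (((hw' x hx.1).mono (Ici_subset_Ici.2 hx.1)).liminf_right_slope_le hr))
      le_rfl
      ?_ t ⟨ht, le_rfl⟩
    · rwa [sub_zero, gronwallBound_ε0] at H
    · intro x hx
      obtain ⟨h1, h2⟩ := hnn x hx.1
      have e1 : δ * c₁ * v₁ x ≤ (c₁ * b₁₁ - c₂ * b₂₁) * v₁ x :=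
        mul_le_mul_of_nonneg_right hδ1 h1
      have e2 : δ * c₂ * v₂ x ≤ (c₂ * b₂₂ - c₁ * b₁₂) * v₂ x :=
        mul_le_mul_of_nonneg_right hδ2 h2
      have q1 : 0 ≤ c₁ * (σ₁ ^ 2 / 2 * (v₁ x) ^ 2) := by positivity
      have q2 : 0 ≤ c₂ * (σ₂ ^ 2 / 2 * (v₂ x) ^ 2) := by positivity
      nlinarith [e1, e2, q1, q2]
  have hw0 : 0 ≤ c₁ * v₁ 0 + c₂ * v₂ 0 := by
    obtain ⟨h1, h2⟩ := hnn 0 le_rfl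
    positivity
  -- exponential bound tends to zero
  have hexp : Tendsto (fun t : ℝ => Real.exp (-δ * t)) atTop (nhds 0) :=
    Real.tendsto_exp_atBot.comp (tendsto_id.const_mul_atTop_of_neg (neg_neg_iff_pos.2 hδ))
  have hv1bd : ∀ t : ℝ, 0 ≤ t →
      v₁ t ≤ (c₁ * v₁ 0 + c₂ * v₂ 0) / c₁ * Real.exp (-δ * t) := by
    intro t ht
    obtain ⟨h1, h2⟩ := hnn t ht
    rw [div_mul_eq_mul_div, le_div_iff₀ hc₁]
    nlinarith [key t ht]
  have hv2bd : ∀ t : ℝ, 0 ≤ t →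
      v₂ t ≤ (c₁ * v₁ 0 + c₂ * v₂ 0) / c₂ * Real.exp (-δ * t) := by
    intro t ht
    obtain ⟨h1, h2⟩ := hnn t ht
    rw [div_mul_eq_mul_div, le_div_iff₀ hc₂]
    nlinarith [key t ht]
  have hT1 : Tendsto v₁ atTop (nhds 0) := by
    apply squeeze_zero' (eventually_atTop.2 ⟨0, fun t ht => (hnn t ht).1⟩)
      (eventually_atTop.2 ⟨0, fun t ht => hv1bd t ht⟩)
    simpa using hexp.const_mul ((c₁ * v₁ 0 + c₂ * v₂ 0) / c₁)
  have hT2 : Tendsto v₂ atTop (nhds 0) := by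
    apply squeeze_zero' (eventually_atTop.2 ⟨0, fun t ht => (hnn t ht).2⟩)
      (eventually_atTop.2 ⟨0, fun t ht => hv2bd t ht⟩)
    simpa using hexp.const_mul ((c₁ * v₁ 0 + c₂ * v₂ 0) / c₂)
  refine ⟨hT1, hT2, ?_⟩
  -- integrability via exponential domination
  have hgint : MeasureTheory.IntegrableOn
      (fun s : ℝ => (a₁ * ((c₁ * v₁ 0 + c₂ * v₂ 0) / c₁)
        + a₂ * ((c₁ * v₁ 0 + c₂ * v₂ 0) / c₂)) * Real.exp (-δ * s)) (Ici 0) := by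
    rw [integrableOn_Ici_iff_integrableOn_Ioi]
    exact (exp_neg_integrableOn_Ioi 0 hδ).const_mul _
  have hfcont : ContinuousOn (fun s => a₁ * v₁ s + a₂ * v₂ s) (Ici 0) :=
    (continuousOn_const.mul (fun t ht => (hd1 t ht).continuousWithinAt)).add
      (continuousOn_const.mul (fun t ht => (hd2 t ht).continuousWithinAt))
  apply MeasureTheory.Integrable.mono' hgint
    (hfcont.aestronglyMeasurable measurableSet_Ici)
  rw [MeasureTheory.ae_restrict_iff' measurableSet_Ici]
  refine MeasureTheory.ae_of_all _ (fun s hs => ?_)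
  obtain ⟨h1, h2⟩ := hnn s hs
  have hb1 := hv1bd s hs
  have hb2 := hv2bd s hs
  have hpos : 0 ≤ a₁ * v₁ s + a₂ * v₂ s := by positivity
  rw [Real.norm_eq_abs, abs_of_nonneg hpos]
  nlinarith [mul_le_mul_of_nonneg_left hb1 ha₁.le, mul_le_mul_of_nonneg_left hb2 ha₂.le]
end

section
/- Let (Ω, ℱ, P) be a probability space, X₀, X₁ : Ω → ℝ² random vectors and g : ℝ² → ℝ Borel measurable, such that g(X₀), g(X₀)X₀, g(X₀)X₁, g(X₀)X₀X₀ᵀ and g(X₀)X₁X₀ᵀ are all integrable. Suppose there exist ρ ∈ ℝ² and a real 2×2 matrix γ such that E[X₁ | σ(X₀)] = ρ + γX₀ almost surely. Then E[g(X₀)]·E[g(X₀)X₁X₀ᵀ] − E[g(X₀)X₁]·E[g(X₀)X₀ᵀ] = γ·(E[g(X₀)]·E[g(X₀)X₀X₀ᵀ] − E[g(X₀)X₀]·E[g(X₀)X₀ᵀ]). -/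
open MeasureTheory Matrix

/-- If `E[X₁ | σ(X₀)] = ρ + γX₀` a.s., then
`E[g(X₀)]·E[g(X₀)X₁X₀ᵀ] − E[g(X₀)X₁]·E[g(X₀)X₀ᵀ]
  = γ·(E[g(X₀)]·E[g(X₀)X₀X₀ᵀ] − E[g(X₀)X₀]·E[g(X₀)X₀ᵀ])`. -/
theorem cov_identity_of_condExp_affine
    {Ω : Type*} [MeasurableSpace Ω] (μ : Measure Ω) [IsProbabilityMeasure μ]
    (X₀ X₁ : Ω → Fin 2 → ℝ) (hX₀ : Measurable X₀) (hX₁ : Measurable X₁)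
    (g : (Fin 2 → ℝ) → ℝ) (hg : Measurable g)
    (hX₁int : Integrable X₁ μ)
    (hint0 : Integrable (fun ω => g (X₀ ω)) μ)
    (hint1 : Integrable (fun ω => g (X₀ ω) • X₀ ω) μ)
    (hint2 : Integrable (fun ω => g (X₀ ω) • X₁ ω) μ)
    (hint3 : ∀ i j : Fin 2, Integrable (fun ω => g (X₀ ω) * X₀ ω i * X₀ ω j) μ)
    (hint4 : ∀ i j : Fin 2, Integrable (fun ω => g (X₀ ω) * X₁ ω i * X₀ ω j) μ)
    (ρ : Fin 2 → ℝ) (γ : Matrix (Fin 2) (Fin 2) ℝ)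
    (hcond : μ[X₁ | MeasurableSpace.comap X₀ inferInstance]
      =ᵐ[μ] fun ω => ρ + γ.mulVec (X₀ ω)) :
    (∫ ω, g (X₀ ω) ∂μ) • (Matrix.of fun i j => ∫ ω, g (X₀ ω) * X₁ ω i * X₀ ω j ∂μ)
        - vecMulVec (∫ ω, g (X₀ ω) • X₁ ω ∂μ) (∫ ω, g (X₀ ω) • X₀ ω ∂μ)
      = γ * ((∫ ω, g (X₀ ω) ∂μ) • (Matrix.of fun i j => ∫ ω, g (X₀ ω) * X₀ ω i * X₀ ω j ∂μ)
        - vecMulVec (∫ ω, g (X₀ ω) • X₀ ω ∂μ) (∫ ω, g (X₀ ω) • X₀ ω ∂μ)) := by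
  have hm : MeasurableSpace.comap X₀ inferInstance ≤ ‹MeasurableSpace Ω› := hX₀.comap_le
  haveI : SigmaFinite (μ.trim hm) := by infer_instance
  -- projections of integrable Pi-valued functions
  have hproj : ∀ (Y : Ω → Fin 2 → ℝ), Integrable Y μ → ∀ i : Fin 2,
      Integrable (fun ω => Y ω i) μ := fun Y hY i =>
    (ContinuousLinearMap.proj (R := ℝ) (φ := fun _ : Fin 2 => ℝ) i).integrable_comp hY
  have happly : ∀ (Y : Ω → Fin 2 → ℝ), Integrable Y μ → ∀ i : Fin 2,
      ∫ ω, Y ω i ∂μ = (∫ ω, Y ω ∂μ) i := fun Y hY i =>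
    (ContinuousLinearMap.proj (R := ℝ) (φ := fun _ : Fin 2 => ℝ) i).integral_comp_comm hY
  -- the affine function is integrable
  have hR : Integrable (fun ω => ρ + γ.mulVec (X₀ ω)) μ := integrable_condExp.congr hcond
  have hm0 : Measurable[MeasurableSpace.comap X₀ inferInstance] X₀ := comap_measurable X₀
  -- componentwise conditional expectation
  have hcomp : ∀ i : Fin 2, (μ[(fun ω => X₁ ω i) | MeasurableSpace.comap X₀ inferInstance])
      =ᵐ[μ] fun ω => ρ i + γ.mulVec (X₀ ω) i := by
    intro i
    have hX1i : Integrable (fun ω => X₁ ω i) μ := hproj X₁ hX₁int i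
    have hRi : Integrable (fun ω => ρ i + γ.mulVec (X₀ ω) i) μ := hproj _ hR i
    refine (ae_eq_condExp_of_forall_setIntegral_eq hm hX1i
      (fun s _ _ => hRi.integrableOn) (fun s hs _ => ?_) ?_).symm
    · have h1 : ∫ ω in s, X₁ ω ∂μ = ∫ ω in s, (ρ + γ.mulVec (X₀ ω)) ∂μ := by
        rw [← setIntegral_condExp hm hX₁int hs]
        exact setIntegral_congr_ae (hm s hs) (hcond.mono fun ω h _ => h)
      have h2 := (ContinuousLinearMap.proj (R := ℝ) (φ := fun _ : Fin 2 => ℝ)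
        i).integral_comp_comm (μ := μ.restrict s) (hR.restrict (s := s))
      have h3 := (ContinuousLinearMap.proj (R := ℝ) (φ := fun _ : Fin 2 => ℝ)
        i).integral_comp_comm (μ := μ.restrict s) (hX₁int.restrict (s := s))
      simp only [ContinuousLinearMap.proj_apply] at h2 h3
      simp only [Pi.add_apply] at h2
      rw [h2, h3, h1]
    · have hmeas : Measurable[MeasurableSpace.comap X₀ inferInstance]
          fun ω => ρ i + γ.mulVec (X₀ ω) i := by
        have h : Measurable fun x : Fin 2 → ℝ => ρ i + γ.mulVec x i := by
          simp only [Matrix.mulVec, dotProduct, Fin.sum_univ_two]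
          fun_prop
        exact h.comp hm0
      exact hmeas.stronglyMeasurable.aestronglyMeasurable
  -- pull-out lemma
  have key : ∀ (i : Fin 2) (f : Ω → ℝ),
      StronglyMeasurable[MeasurableSpace.comap X₀ inferInstance] f →
      Integrable (fun ω => f ω * X₁ ω i) μ →
      ∫ ω, f ω * X₁ ω i ∂μ = ∫ ω, f ω * (ρ i + γ.mulVec (X₀ ω) i) ∂μ := by
    intro i f hf hfi
    have hX1i : Integrable (fun ω => X₁ ω i) μ := hproj X₁ hX₁int i
    have h1 : (μ[(fun ω => f ω * X₁ ω i) | MeasurableSpace.comap X₀ inferInstance]) =ᵐ[μ]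
        fun ω => f ω * (ρ i + γ.mulVec (X₀ ω) i) := by
      have h2 := condExp_mul_of_stronglyMeasurable_left (μ := μ) hf hfi hX1i
      refine h2.trans ?_
      filter_upwards [hcomp i] with ω hω
      simp only [Pi.mul_apply, hω]
    calc ∫ ω, f ω * X₁ ω i ∂μ
        = ∫ ω, (μ[(fun ω => f ω * X₁ ω i) | MeasurableSpace.comap X₀ inferInstance]) ω ∂μ :=
          (integral_condExp hm).symm
      _ = ∫ ω, f ω * (ρ i + γ.mulVec (X₀ ω) i) ∂μ := integral_congr_ae h1
  -- strongly measurable building blocks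
  have hsg : StronglyMeasurable[MeasurableSpace.comap X₀ inferInstance] fun ω => g (X₀ ω) :=
    (hg.comp hm0).stronglyMeasurable
  have hsX0 : ∀ j : Fin 2,
      StronglyMeasurable[MeasurableSpace.comap X₀ inferInstance] fun ω => X₀ ω j := fun j =>
    ((measurable_pi_apply j).comp hm0).stronglyMeasurable
  -- integrable building blocks
  have hgX0 : ∀ k : Fin 2, Integrable (fun ω => g (X₀ ω) * X₀ ω k) μ := fun k =>
    hproj _ hint1 k
  have hgX1 : ∀ k : Fin 2, Integrable (fun ω => g (X₀ ω) * X₁ ω k) μ := fun k =>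
    hproj _ hint2 k
  have mulVec_eq : ∀ (x : Fin 2 → ℝ) (i : Fin 2),
      γ.mulVec x i = γ i 0 * x 0 + γ i 1 * x 1 := by
    intro x i; simp [Matrix.mulVec, dotProduct, Fin.sum_univ_two]
  -- first moment identity
  have E1 : ∀ i : Fin 2, ∫ ω, g (X₀ ω) * X₁ ω i ∂μ
      = ρ i * (∫ ω, g (X₀ ω) ∂μ) + γ i 0 * (∫ ω, g (X₀ ω) * X₀ ω 0 ∂μ)
        + γ i 1 * (∫ ω, g (X₀ ω) * X₀ ω 1 ∂μ) := by
    intro i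
    rw [key i (fun ω => g (X₀ ω)) hsg (hgX1 i)]
    have hsplit : (fun ω => g (X₀ ω) * (ρ i + γ.mulVec (X₀ ω) i))
        = fun ω => ρ i * g (X₀ ω) + (γ i 0 * (g (X₀ ω) * X₀ ω 0)
            + γ i 1 * (g (X₀ ω) * X₀ ω 1)) := by
      funext ω; rw [mulVec_eq]; ring
    rw [hsplit, integral_add (hint0.const_mul _)
        (show Integrable (fun ω => γ i 0 * (g (X₀ ω) * X₀ ω 0)
          + γ i 1 * (g (X₀ ω) * X₀ ω 1)) μ from
          ((hgX0 0).const_mul _).add ((hgX0 1).const_mul _)),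
      integral_add ((hgX0 0).const_mul _) ((hgX0 1).const_mul _),
      integral_const_mul, integral_const_mul, integral_const_mul]
    ring
  -- second moment identity
  have E2 : ∀ i j : Fin 2, (∫ ω, g (X₀ ω) * X₁ ω i * X₀ ω j ∂μ)
      = ρ i * (∫ ω, g (X₀ ω) * X₀ ω j ∂μ)
        + γ i 0 * (∫ ω, g (X₀ ω) * X₀ ω 0 * X₀ ω j ∂μ)
        + γ i 1 * (∫ ω, g (X₀ ω) * X₀ ω 1 * X₀ ω j ∂μ) := by
    intro i j
    have hfint : Integrable (fun ω => (g (X₀ ω) * X₀ ω j) * X₁ ω i) μ := by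
      refine (hint4 i j).congr (Filter.Eventually.of_forall fun ω => ?_)
      ring
    have hL : (fun ω => g (X₀ ω) * X₁ ω i * X₀ ω j)
        = fun ω => (g (X₀ ω) * X₀ ω j) * X₁ ω i := by funext ω; ring
    rw [hL, key i (fun ω => g (X₀ ω) * X₀ ω j) (hsg.mul (hsX0 j)) hfint]
    have hsplit : (fun ω => (g (X₀ ω) * X₀ ω j) * (ρ i + γ.mulVec (X₀ ω) i))
        = fun ω => ρ i * (g (X₀ ω) * X₀ ω j)
            + (γ i 0 * (g (X₀ ω) * X₀ ω 0 * X₀ ω j)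
              + γ i 1 * (g (X₀ ω) * X₀ ω 1 * X₀ ω j)) := by
      funext ω; rw [mulVec_eq]; ring
    rw [hsplit, integral_add ((hgX0 j).const_mul _)
        (show Integrable (fun ω => γ i 0 * (g (X₀ ω) * X₀ ω 0 * X₀ ω j)
          + γ i 1 * (g (X₀ ω) * X₀ ω 1 * X₀ ω j)) μ from
          ((hint3 0 j).const_mul _).add ((hint3 1 j).const_mul _)),
      integral_add ((hint3 0 j).const_mul _) ((hint3 1 j).const_mul _),
      integral_const_mul, integral_const_mul, integral_const_mul]
    ring
  -- vector integrals componentwise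
  have hv0 : ∀ k : Fin 2, (∫ ω, g (X₀ ω) • X₀ ω ∂μ) k = ∫ ω, g (X₀ ω) * X₀ ω k ∂μ := fun k =>
    (happly _ hint1 k).symm
  have hv1 : ∀ k : Fin 2, (∫ ω, g (X₀ ω) • X₁ ω ∂μ) k = ∫ ω, g (X₀ ω) * X₁ ω k ∂μ := fun k =>
    (happly _ hint2 k).symm
  -- final algebra
  ext i j
  simp only [Matrix.sub_apply, Matrix.smul_apply, Matrix.of_apply, smul_eq_mul,
    vecMulVec_apply, Matrix.mul_apply, Fin.sum_univ_two, hv0, hv1]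
  rw [E2 i j, E1 i]
  ring
end

section
/- Let B be a real 2×2 matrix and A, x ∈ ℝ², and define f(t) = exp(−tB)·x + ∫₀ᵗ exp(−(t−s)B)·A ds. Then for all t ≥ 0, f(t)·f(t)ᵀ = exp(−tB)·x·xᵀ·exp(−tBᵀ) + ∫₀ᵗ exp(−(t−s)B)·(f(s)·Aᵀ + A·f(s)ᵀ)·exp(−(t−s)Bᵀ) ds. -/
open Matrix intervalIntegral

noncomputable section

/-- `f(t) = exp(-tB)·x + ∫₀ᵗ exp(-(t-s)B)·A ds`, the conditional mean of the
two-type CBI-process with drift `dX_t = (A - BX_t)dt`. -/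
def condMean (B : Matrix (Fin 2) (Fin 2) ℝ) (A x : Fin 2 → ℝ) (t : ℝ) : Fin 2 → ℝ :=
  (NormedSpace.exp (-(t • B))).mulVec x
    + ∫ s in (0:ℝ)..t, (NormedSpace.exp (-((t - s) • B))).mulVec A

namespace CondMeanAux

open MeasureTheory

variable (B : Matrix (Fin 2) (Fin 2) ℝ)

lemma exp_cont : Continuous fun s : ℝ => NormedSpace.exp (-(s • B)) := by
  letI : SeminormedRing (Matrix (Fin 2) (Fin 2) ℝ) := Matrix.linftyOpSemiNormedRing
  letI : NormedRing (Matrix (Fin 2) (Fin 2) ℝ) := Matrix.linftyOpNormedRing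
  letI : NormedAlgebra ℝ (Matrix (Fin 2) (Fin 2) ℝ) := Matrix.linftyOpNormedAlgebra
  exact (continuous_iff_continuousAt.2 fun y =>
    (NormedSpace.exp_analytic (𝕂 := ℝ) y).continuousAt).comp ((continuous_id.smul continuous_const).neg)

lemma exp_mul_exp (a b : ℝ) :
    NormedSpace.exp (-(a • B)) * NormedSpace.exp (-(b • B))
      = NormedSpace.exp (-((a + b) • B)) := by
  have hc : Commute (-(a • B)) (-(b • B)) := by
    rw [← neg_smul, ← neg_smul]
    exact ((Commute.refl B).smul_left (-a)).smul_right (-b)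
  rw [← Matrix.exp_add_of_commute _ _ hc]
  congr 1
  module

lemma exp_transpose' (s : ℝ) :
    NormedSpace.exp (-(s • Bᵀ)) = (NormedSpace.exp (-(s • B)))ᵀ := by
  rw [← transpose_smul, ← transpose_neg, Matrix.exp_transpose]

lemma conj_entry (M : Matrix (Fin 2) (Fin 2) ℝ) (u v : Fin 2 → ℝ) (i j : Fin 2) :
    (M * vecMulVec u v * Mᵀ) i j = M.mulVec u i * M.mulVec v j := by
  simp [Matrix.mul_apply, vecMulVec_apply, Matrix.mulVec, dotProduct, Fin.sum_univ_two]
  ring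

lemma mulVec_intervalIntegral (M : Matrix (Fin 2) (Fin 2) ℝ) {g : ℝ → Fin 2 → ℝ}
    {a b : ℝ} (hg : IntervalIntegrable g volume a b) :
    M.mulVec (∫ s in a..b, g s) = ∫ s in a..b, M.mulVec (g s) := by
  have := (LinearMap.toContinuousLinearMap (Matrix.mulVecLin M)).intervalIntegral_comp_comm hg
  simpa [Matrix.mulVecLin_apply] using this.symm

lemma intervalIntegral_apply' {g : ℝ → Fin 2 → ℝ} {a b : ℝ}
    (hg : IntervalIntegrable g volume a b) (k : Fin 2) :
    (∫ s in a..b, g s) k = ∫ s in a..b, g s k := by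
  have := (ContinuousLinearMap.proj (R := ℝ) (φ := fun _ : Fin 2 => ℝ)
      k).intervalIntegral_comp_comm hg
  simpa using this.symm

variable (A x : Fin 2 → ℝ)

lemma h_cont (t : ℝ) :
    Continuous fun s : ℝ => (NormedSpace.exp (-((t - s) • B))).mulVec A :=
  ((exp_cont B).comp (continuous_const.sub continuous_id)).matrix_mulVec continuous_const

lemma G_eq (t s : ℝ) :
    (NormedSpace.exp (-((t - s) • B))).mulVec (condMean B A x s)
      = (NormedSpace.exp (-(t • B))).mulVec x
        + ∫ u in (0:ℝ)..s, (NormedSpace.exp (-((t - u) • B))).mulVec A := by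
  rw [condMean, Matrix.mulVec_add]
  congr 1
  · rw [Matrix.mulVec_mulVec, exp_mul_exp]
    norm_num
  · rw [mulVec_intervalIntegral _ ((h_cont B A s).intervalIntegrable 0 s)]
    refine intervalIntegral.integral_congr fun u _ => ?_
    rw [Matrix.mulVec_mulVec, exp_mul_exp]
    ring_nf

end CondMeanAux

open CondMeanAux MeasureTheory in
/-- the outer product `f(t)f(t)ᵀ` satisfies (entrywise)
`f(t)f(t)ᵀ = exp(-tB)xxᵀexp(-tBᵀ)
  + ∫₀ᵗ exp(-(t-s)B)(f(s)Aᵀ + Af(s)ᵀ)exp(-(t-s)Bᵀ) ds`. -/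
theorem condMean_outer_eq (B : Matrix (Fin 2) (Fin 2) ℝ) (A x : Fin 2 → ℝ)
    (t : ℝ) (ht : 0 ≤ t) (i j : Fin 2) :
    vecMulVec (condMean B A x t) (condMean B A x t) i j
      = (NormedSpace.exp (-(t • B)) * vecMulVec x x
          * NormedSpace.exp (-(t • Bᵀ))) i j
        + ∫ s in (0:ℝ)..t,
            (NormedSpace.exp (-((t - s) • B))
              * (vecMulVec (condMean B A x s) A + vecMulVec A (condMean B A x s))
              * NormedSpace.exp (-((t - s) • Bᵀ))) i j := by
  classical
  set c : Fin 2 → ℝ := (NormedSpace.exp (-(t • B))).mulVec x with hc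
  set h : ℝ → Fin 2 → ℝ := fun s => (NormedSpace.exp (-((t - s) • B))).mulVec A with hh
  have hcont : ∀ k, Continuous fun s => h s k := fun k =>
    (continuous_apply k).comp (h_cont B A t)
  set H : Fin 2 → ℝ → ℝ := fun k s => ∫ u in (0:ℝ)..s, h u k with hHdef
  have hHderiv : ∀ k s, HasDerivAt (H k) (h s k) s := fun k s =>
    ((hcont k).integral_hasStrictDerivAt 0 s).hasDerivAt
  have hHcont : ∀ k, Continuous (H k) := fun k =>
    continuous_iff_continuousAt.2 fun s => (hHderiv k s).continuousAt
  have hG : ∀ s k,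
      (NormedSpace.exp (-((t - s) • B))).mulVec (condMean B A x s) k = c k + H k s := by
    intro s k
    rw [G_eq B A x t s, Pi.add_apply,
      intervalIntegral_apply' ((h_cont B A t).intervalIntegrable 0 s) k]
  set φ : ℝ → ℝ := fun s => (c i + H i s) * (c j + H j s) with hφdef
  have hφ : ∀ s, HasDerivAt φ (h s i * (c j + H j s) + (c i + H i s) * h s j) s := by
    intro s
    have := (((hasDerivAt_const s (c i)).add (hHderiv i s)).mul
      ((hasDerivAt_const s (c j)).add (hHderiv j s)))
    simp only [zero_add] at this
    exact this
  have hint : ∀ s,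
      (NormedSpace.exp (-((t - s) • B))
        * (vecMulVec (condMean B A x s) A + vecMulVec A (condMean B A x s))
        * NormedSpace.exp (-((t - s) • Bᵀ))) i j
      = h s i * (c j + H j s) + (c i + H i s) * h s j := by
    intro s
    rw [exp_transpose' B (t - s), mul_add, add_mul, Matrix.add_apply,
      conj_entry, conj_entry, hG s i, hG s j]
    simp only [hh]
    ring
  have key : (∫ s in (0:ℝ)..t,
      (NormedSpace.exp (-((t - s) • B))
        * (vecMulVec (condMean B A x s) A + vecMulVec A (condMean B A x s))
        * NormedSpace.exp (-((t - s) • Bᵀ))) i j) = φ t - φ 0 := by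
    rw [intervalIntegral.integral_congr (fun s _ => hint s)]
    refine intervalIntegral.integral_eq_sub_of_hasDerivAt (fun s _ => hφ s) ?_
    exact (((hcont i).mul (continuous_const.add (hHcont j))).add
      ((continuous_const.add (hHcont i)).mul (hcont j))).intervalIntegrable 0 t
  have hft : ∀ k, condMean B A x t k = c k + H k t := by
    intro k
    have := hG t k
    rwa [sub_self, zero_smul, neg_zero, NormedSpace.exp_zero, Matrix.one_mulVec] at this
  have h0 : φ 0 = c i * c j := by
    simp [hφdef, hHdef, intervalIntegral.integral_same]
  have h1 : φ t = condMean B A x t i * condMean B A x t j := by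
    rw [hφdef]
    rw [hft i, hft j]
  rw [vecMulVec_apply, exp_transpose' B t, key, conj_entry, h0, h1]
  ring

end
end

section
/- Let B be a real 2×2 matrix, A, x ∈ ℝ², σ₁, σ₂ ∈ ℝ, let f(t) = exp(−tB)·x + ∫₀ᵗ exp(−(t−s)B)·A ds, and for y = (y₁,y₂) ∈ ℝ² write D(y) = diag(σ₁²y₁, σ₂²y₂). Define h(t) = exp(−tB)·x·xᵀ·exp(−tBᵀ) + ∫₀ᵗ exp(−(t−s)B)·(f(s)Aᵀ + Af(s)ᵀ + D(f(s)))·exp(−(t−s)Bᵀ) ds. Then h(0) = xxᵀ, h is differentiable, and h′(t) = f(t)Aᵀ + Af(t)ᵀ − B·h(t) − h(t)·Bᵀ + D(f(t)) for all t ≥ 0; equivalently, h satisfies the integral equation h(t) = xxᵀ + ∫₀ᵗ { f(s)Aᵀ + Af(s)ᵀ − (B·h(s) + h(s)·Bᵀ) + D(f(s)) } ds. -/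
open Matrix intervalIntegral

noncomputable section

/-- `D(y) = diag(σ₁²y₁, σ₂²y₂)`. -/
def Dmat (σ₁ σ₂ : ℝ) (y : Fin 2 → ℝ) : Matrix (Fin 2) (Fin 2) ℝ :=
  Matrix.diagonal ![σ₁ ^ 2 * y 0, σ₂ ^ 2 * y 1]

/-- `h(t) = exp(-tB)xxᵀexp(-tBᵀ)
  + ∫₀ᵗ exp(-(t-s)B)(f(s)Aᵀ + Af(s)ᵀ + D(f(s)))exp(-(t-s)Bᵀ) ds`, the
conditional second moment of the two-type CBI-process (defined entrywise). -/
def condSecond (B : Matrix (Fin 2) (Fin 2) ℝ) (A x : Fin 2 → ℝ) (σ₁ σ₂ : ℝ) (t : ℝ) :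
    Matrix (Fin 2) (Fin 2) ℝ :=
  Matrix.of fun i j =>
    (NormedSpace.exp (-(t • B)) * vecMulVec x x * NormedSpace.exp (-(t • Bᵀ))) i j
      + ∫ s in (0:ℝ)..t,
          (NormedSpace.exp (-((t - s) • B))
            * (vecMulVec (condMean B A x s) A + vecMulVec A (condMean B A x s)
                + Dmat σ₁ σ₂ (condMean B A x s))
            * NormedSpace.exp (-((t - s) • Bᵀ))) i j

/-! ### Auxiliary lemmas -/

lemma expEntry_hasDerivAt (M : Matrix (Fin 2) (Fin 2) ℝ) (t : ℝ) (i j : Fin 2) :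
    HasDerivAt (fun u : ℝ => NormedSpace.exp (u • M) i j)
      ((NormedSpace.exp (t • M) * M) i j) t := by
  letI : SeminormedRing (Matrix (Fin 2) (Fin 2) ℝ) := Matrix.linftyOpSemiNormedRing
  letI : NormedRing (Matrix (Fin 2) (Fin 2) ℝ) := Matrix.linftyOpNormedRing
  letI : NormedAlgebra ℝ (Matrix (Fin 2) (Fin 2) ℝ) := Matrix.linftyOpNormedAlgebra
  letI : CompleteSpace (Matrix (Fin 2) (Fin 2) ℝ) := FiniteDimensional.complete ℝ _
  have h := hasDerivAt_exp_smul_const (𝕂 := ℝ) M t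
  let L : Matrix (Fin 2) (Fin 2) ℝ →ₗ[ℝ] ℝ :=
    { toFun := fun N => N i j, map_add' := fun _ _ => rfl, map_smul' := fun _ _ => rfl }
  exact (LinearMap.toContinuousLinearMap L).hasFDerivAt.comp_hasDerivAt t h

lemma expEntry_hasDerivAt' (M : Matrix (Fin 2) (Fin 2) ℝ) (t : ℝ) (i j : Fin 2) :
    HasDerivAt (fun u : ℝ => NormedSpace.exp (u • M) i j)
      ((M * NormedSpace.exp (t • M)) i j) t := by
  letI : SeminormedRing (Matrix (Fin 2) (Fin 2) ℝ) := Matrix.linftyOpSemiNormedRing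
  letI : NormedRing (Matrix (Fin 2) (Fin 2) ℝ) := Matrix.linftyOpNormedRing
  letI : NormedAlgebra ℝ (Matrix (Fin 2) (Fin 2) ℝ) := Matrix.linftyOpNormedAlgebra
  letI : CompleteSpace (Matrix (Fin 2) (Fin 2) ℝ) := FiniteDimensional.complete ℝ _
  have h := hasDerivAt_exp_smul_const' (𝕂 := ℝ) M t
  let L : Matrix (Fin 2) (Fin 2) ℝ →ₗ[ℝ] ℝ :=
    { toFun := fun N => N i j, map_add' := fun _ _ => rfl, map_smul' := fun _ _ => rfl }
  exact (LinearMap.toContinuousLinearMap L).hasFDerivAt.comp_hasDerivAt t h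

lemma expNegEntry_hasDerivAt (M : Matrix (Fin 2) (Fin 2) ℝ) (t : ℝ) (i j : Fin 2) :
    HasDerivAt (fun u : ℝ => NormedSpace.exp (-(u • M)) i j)
      ((NormedSpace.exp (-(t • M)) * (-M)) i j) t := by
  simpa only [smul_neg] using expEntry_hasDerivAt (-M) t i j

lemma expNegEntry_hasDerivAt' (M : Matrix (Fin 2) (Fin 2) ℝ) (t : ℝ) (i j : Fin 2) :
    HasDerivAt (fun u : ℝ => NormedSpace.exp (-(u • M)) i j)
      (((-M) * NormedSpace.exp (-(t • M))) i j) t := by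
  simpa only [smul_neg] using expEntry_hasDerivAt' (-M) t i j

lemma expEntry_cont (M : Matrix (Fin 2) (Fin 2) ℝ) (i j : Fin 2) :
    Continuous (fun u : ℝ => NormedSpace.exp (u • M) i j) :=
  continuous_iff_continuousAt.2 fun t => (expEntry_hasDerivAt M t i j).continuousAt

lemma expNegEntry_cont (M : Matrix (Fin 2) (Fin 2) ℝ) (i j : Fin 2) :
    Continuous (fun u : ℝ => NormedSpace.exp (-(u • M)) i j) :=
  continuous_iff_continuousAt.2 fun t => (expNegEntry_hasDerivAt M t i j).continuousAt

lemma exp_factor (M : Matrix (Fin 2) (Fin 2) ℝ) (t s : ℝ) :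
    NormedSpace.exp (-((t - s) • M))
      = NormedSpace.exp (-(t • M)) * NormedSpace.exp (s • M) := by
  have h : -((t - s) • M) = -(t • M) + s • M := by
    rw [sub_smul]; abel
  rw [h, Matrix.exp_add_of_commute]
  exact (((Commute.refl M).smul_left t).smul_right s).neg_left

lemma exp_factor' (M : Matrix (Fin 2) (Fin 2) ℝ) (t s : ℝ) :
    NormedSpace.exp (-((t - s) • M))
      = NormedSpace.exp (s • M) * NormedSpace.exp (-(t • M)) := by
  have h : -((t - s) • M) = s • M + -(t • M) := by
    rw [sub_smul]; abel
  rw [h, Matrix.exp_add_of_commute]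
  exact (((Commute.refl M).smul_left s).smul_right t).neg_right

lemma expNeg_mul_exp (M : Matrix (Fin 2) (Fin 2) ℝ) (t : ℝ) :
    NormedSpace.exp (-(t • M)) * NormedSpace.exp (t • M) = 1 := by
  rw [← Matrix.exp_add_of_commute _ _ ((Commute.refl (t • M)).neg_left),
    neg_add_cancel, NormedSpace.exp_zero]

lemma exp_mul_expNeg (M : Matrix (Fin 2) (Fin 2) ℝ) (t : ℝ) :
    NormedSpace.exp (t • M) * NormedSpace.exp (-(t • M)) = 1 := by
  rw [← Matrix.exp_add_of_commute _ _ ((Commute.refl (t • M)).neg_right),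
    add_neg_cancel, NormedSpace.exp_zero]

lemma mul3_apply (M N P : Matrix (Fin 2) (Fin 2) ℝ) (i j : Fin 2) :
    (M * N * P) i j = ∑ k, ∑ l, M i k * N k l * P l j := by
  rw [Finset.sum_comm]
  simp_rw [Matrix.mul_apply, Finset.sum_mul]

lemma primitive_hasDerivAt {g : ℝ → ℝ} (hg : Continuous g) (t : ℝ) :
    HasDerivAt (fun u => ∫ s in (0:ℝ)..u, g s) (g t) t :=
  intervalIntegral.integral_hasDerivAt_right (hg.intervalIntegrable _ _)
    (hg.stronglyMeasurableAtFilter _ _) hg.continuousAt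

lemma expMulVec_cont (B : Matrix (Fin 2) (Fin 2) ℝ) (A : Fin 2 → ℝ) :
    Continuous fun s : ℝ => (NormedSpace.exp (s • B)).mulVec A :=
  continuous_pi fun k => by
    simp only [Matrix.mulVec, dotProduct]
    exact continuous_finset_sum _ fun l _ => (expEntry_cont B k l).mul continuous_const

lemma expNegMulVec_cont (B : Matrix (Fin 2) (Fin 2) ℝ) (A : Fin 2 → ℝ) :
    Continuous fun s : ℝ => (NormedSpace.exp (-(s • B))).mulVec A :=
  continuous_pi fun k => by
    simp only [Matrix.mulVec, dotProduct]
    exact continuous_finset_sum _ fun l _ => (expNegEntry_cont B k l).mul continuous_const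

lemma condMean_apply (B : Matrix (Fin 2) (Fin 2) ℝ) (A x : Fin 2 → ℝ) (t : ℝ) (i : Fin 2) :
    condMean B A x t i
      = (NormedSpace.exp (-(t • B))).mulVec x i
        + ∑ k, NormedSpace.exp (-(t • B)) i k *
            ∫ s in (0:ℝ)..t, (NormedSpace.exp (s • B)).mulVec A k := by
  have hint : IntervalIntegrable
      (fun s : ℝ => (NormedSpace.exp (-((t - s) • B))).mulVec A)
      MeasureTheory.volume 0 t :=
    ((expNegMulVec_cont B A).comp (continuous_const.sub continuous_id)).intervalIntegrable 0 t
  have h1 : (∫ s in (0:ℝ)..t, (NormedSpace.exp (-((t - s) • B))).mulVec A) i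
      = ∫ s in (0:ℝ)..t, ((NormedSpace.exp (-((t - s) • B))).mulVec A) i :=
    ((ContinuousLinearMap.proj (R := ℝ) (φ := fun _ : Fin 2 => ℝ) i).intervalIntegral_comp_comm
      hint).symm
  have h2 : ∀ s : ℝ, ((NormedSpace.exp (-((t - s) • B))).mulVec A) i
      = ∑ k, NormedSpace.exp (-(t • B)) i k * (NormedSpace.exp (s • B)).mulVec A k := by
    intro s
    rw [exp_factor, ← Matrix.mulVec_mulVec]
    simp [Matrix.mulVec, dotProduct]
  rw [condMean, Pi.add_apply, h1,
    intervalIntegral.integral_congr (g := fun s => ∑ k, NormedSpace.exp (-(t • B)) i k *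
      (NormedSpace.exp (s • B)).mulVec A k) (fun s _ => h2 s),
    intervalIntegral.integral_finset_sum]
  · exact congrArg _ (Finset.sum_congr rfl fun k _ => intervalIntegral.integral_const_mul _ _)
  · intro k _
    exact (continuous_const.mul ((continuous_apply k).comp (expMulVec_cont B A))).intervalIntegrable
      0 t

lemma condMean_entry_cont (B : Matrix (Fin 2) (Fin 2) ℝ) (A x : Fin 2 → ℝ) (i : Fin 2) :
    Continuous fun t : ℝ => condMean B A x t i := by
  have hprim : ∀ k : Fin 2, Continuous fun t : ℝ =>
      ∫ s in (0:ℝ)..t, (NormedSpace.exp (s • B)).mulVec A k := fun k =>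
    continuous_iff_continuousAt.2 fun t =>
      (primitive_hasDerivAt ((continuous_apply k).comp (expMulVec_cont B A)) t).continuousAt
  simp only [condMean_apply]
  refine Continuous.add ?_ (continuous_finset_sum _ fun k _ =>
    (expNegEntry_cont B i k).mul (hprim k))
  simp only [Matrix.mulVec, dotProduct]
  exact continuous_finset_sum _ fun l _ => (expNegEntry_cont B i l).mul continuous_const

/-- `G(s) = f(s)Aᵀ + Af(s)ᵀ + D(f(s))`. -/
def Gmat (B : Matrix (Fin 2) (Fin 2) ℝ) (A x : Fin 2 → ℝ) (σ₁ σ₂ : ℝ) (s : ℝ) :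
    Matrix (Fin 2) (Fin 2) ℝ :=
  vecMulVec (condMean B A x s) A + vecMulVec A (condMean B A x s)
    + Dmat σ₁ σ₂ (condMean B A x s)

lemma Gmat_entry_cont (B : Matrix (Fin 2) (Fin 2) ℝ) (A x : Fin 2 → ℝ) (σ₁ σ₂ : ℝ)
    (k l : Fin 2) : Continuous fun s : ℝ => Gmat B A x σ₁ σ₂ s k l := by
  simp only [Gmat, Matrix.add_apply, Matrix.vecMulVec_apply, Dmat, Matrix.diagonal_apply]
  refine (((condMean_entry_cont B A x k).mul continuous_const).add
    (continuous_const.mul (condMean_entry_cont B A x l))).add ?_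
  rcases eq_or_ne k l with h | h
  · subst h
    simp only [if_pos rfl]
    fin_cases k
    · simpa using continuous_const.fun_mul (condMean_entry_cont B A x 0)
    · simpa using continuous_const.fun_mul (condMean_entry_cont B A x 1)
  · simp only [if_neg h]
    exact continuous_const

lemma Y_entry_cont (B : Matrix (Fin 2) (Fin 2) ℝ) (A x : Fin 2 → ℝ) (σ₁ σ₂ : ℝ)
    (k l : Fin 2) : Continuous fun s : ℝ =>
      (NormedSpace.exp (s • B) * Gmat B A x σ₁ σ₂ s * NormedSpace.exp (s • Bᵀ)) k l := by
  simp only [mul3_apply]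
  exact continuous_finset_sum _ fun a _ => continuous_finset_sum _ fun b _ =>
    ((expEntry_cont B k a).mul (Gmat_entry_cont B A x σ₁ σ₂ a b)).mul (expEntry_cont Bᵀ b l)

/-- `K(t) = xxᵀ + ∫₀ᵗ exp(sB) G(s) exp(sBᵀ) ds` (entrywise). -/
def Kmat (B : Matrix (Fin 2) (Fin 2) ℝ) (A x : Fin 2 → ℝ) (σ₁ σ₂ : ℝ) (t : ℝ) :
    Matrix (Fin 2) (Fin 2) ℝ :=
  Matrix.of fun k l => vecMulVec x x k l
    + ∫ s in (0:ℝ)..t,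
        (NormedSpace.exp (s • B) * Gmat B A x σ₁ σ₂ s * NormedSpace.exp (s • Bᵀ)) k l

set_option maxHeartbeats 1000000 in
lemma condSecond_factor (B : Matrix (Fin 2) (Fin 2) ℝ) (A x : Fin 2 → ℝ) (σ₁ σ₂ : ℝ) (t : ℝ) :
    condSecond B A x σ₁ σ₂ t
      = NormedSpace.exp (-(t • B)) * Kmat B A x σ₁ σ₂ t
          * NormedSpace.exp (-(t • Bᵀ)) := by
  ext i j
  have hint_eq : ∀ s : ℝ,
      (NormedSpace.exp (-((t - s) • B))
        * (vecMulVec (condMean B A x s) A + vecMulVec A (condMean B A x s)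
            + Dmat σ₁ σ₂ (condMean B A x s))
        * NormedSpace.exp (-((t - s) • Bᵀ))) i j
      = ∑ k, ∑ l, NormedSpace.exp (-(t • B)) i k *
          (NormedSpace.exp (s • B) * Gmat B A x σ₁ σ₂ s * NormedSpace.exp (s • Bᵀ)) k l *
          NormedSpace.exp (-(t • Bᵀ)) l j := by
    intro s
    rw [← mul3_apply, exp_factor B t s, exp_factor' Bᵀ t s]
    have hG : vecMulVec (condMean B A x s) A + vecMulVec A (condMean B A x s)
        + Dmat σ₁ σ₂ (condMean B A x s) = Gmat B A x σ₁ σ₂ s := rfl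
    rw [hG]
    have hassoc : NormedSpace.exp (-(t • B)) * NormedSpace.exp (s • B) *
        Gmat B A x σ₁ σ₂ s * (NormedSpace.exp (s • Bᵀ) * NormedSpace.exp (-(t • Bᵀ)))
        = NormedSpace.exp (-(t • B)) * (NormedSpace.exp (s • B) * Gmat B A x σ₁ σ₂ s *
          NormedSpace.exp (s • Bᵀ)) * NormedSpace.exp (-(t • Bᵀ)) := by
      simp only [mul_assoc]
    rw [hassoc]
  simp only [condSecond, Matrix.of_apply]
  rw [intervalIntegral.integral_congr (fun s _ => hint_eq s)]
  rw [intervalIntegral.integral_finset_sum fun k _ =>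
    ((continuous_finset_sum _ fun l _ =>
      (continuous_const.fun_mul (Y_entry_cont B A x σ₁ σ₂ k l)).fun_mul
        continuous_const).intervalIntegrable 0 t)]
  have hinner : ∀ k ∈ (Finset.univ : Finset (Fin 2)),
      (∫ s in (0:ℝ)..t, ∑ l, NormedSpace.exp (-(t • B)) i k *
        (NormedSpace.exp (s • B) * Gmat B A x σ₁ σ₂ s * NormedSpace.exp (s • Bᵀ)) k l *
        NormedSpace.exp (-(t • Bᵀ)) l j)
      = ∑ l, NormedSpace.exp (-(t • B)) i k *
          (∫ s in (0:ℝ)..t,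
            (NormedSpace.exp (s • B) * Gmat B A x σ₁ σ₂ s * NormedSpace.exp (s • Bᵀ)) k l) *
          NormedSpace.exp (-(t • Bᵀ)) l j := by
    intro k _
    rw [intervalIntegral.integral_finset_sum fun l _ =>
      (((continuous_const.fun_mul (Y_entry_cont B A x σ₁ σ₂ k l)).fun_mul
        continuous_const).intervalIntegrable 0 t)]
    exact Finset.sum_congr rfl fun l _ => by
      rw [intervalIntegral.integral_mul_const, intervalIntegral.integral_const_mul]
  rw [Finset.sum_congr rfl hinner]
  simp only [mul3_apply, Kmat, Matrix.of_apply, Matrix.vecMulVec_apply, mul_add, add_mul,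
    Finset.sum_add_distrib]

lemma condSecond_zero (B : Matrix (Fin 2) (Fin 2) ℝ) (A x : Fin 2 → ℝ) (σ₁ σ₂ : ℝ) :
    condSecond B A x σ₁ σ₂ 0 = vecMulVec x x := by
  ext i j
  simp [condSecond, NormedSpace.exp_zero]

set_option maxHeartbeats 1000000 in
lemma condSecond_entry_hasDerivAt (B : Matrix (Fin 2) (Fin 2) ℝ) (A x : Fin 2 → ℝ)
    (σ₁ σ₂ : ℝ) (t : ℝ) (i j : Fin 2) :
    HasDerivAt (fun u => condSecond B A x σ₁ σ₂ u i j)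
      ((Gmat B A x σ₁ σ₂ t
        - (B * condSecond B A x σ₁ σ₂ t + condSecond B A x σ₁ σ₂ t * Bᵀ)) i j) t := by
  have hK : ∀ k l : Fin 2, HasDerivAt (fun u => Kmat B A x σ₁ σ₂ u k l)
      ((NormedSpace.exp (t • B) * Gmat B A x σ₁ σ₂ t * NormedSpace.exp (t • Bᵀ)) k l)
      t := fun k l =>
    (primitive_hasDerivAt (Y_entry_cont B A x σ₁ σ₂ k l) t).const_add (vecMulVec x x k l)
  have hsum : HasDerivAt
      (fun u => ∑ k, ∑ l, NormedSpace.exp (-(u • B)) i k *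
        Kmat B A x σ₁ σ₂ u k l * NormedSpace.exp (-(u • Bᵀ)) l j)
      (∑ k, ∑ l,
        ((((-B) * NormedSpace.exp (-(t • B))) i k * Kmat B A x σ₁ σ₂ t k l
          + NormedSpace.exp (-(t • B)) i k *
            (NormedSpace.exp (t • B) * Gmat B A x σ₁ σ₂ t * NormedSpace.exp (t • Bᵀ)) k l)
            * NormedSpace.exp (-(t • Bᵀ)) l j
          + NormedSpace.exp (-(t • B)) i k * Kmat B A x σ₁ σ₂ t k l *
            (NormedSpace.exp (-(t • Bᵀ)) * (-Bᵀ)) l j)) t :=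
    HasDerivAt.fun_sum fun k _ => HasDerivAt.fun_sum fun l _ =>
      ((expNegEntry_hasDerivAt' B t i k).fun_mul (hK k l)).fun_mul (expNegEntry_hasDerivAt Bᵀ t l j)
  have hA : ((-B) * NormedSpace.exp (-(t • B))) * Kmat B A x σ₁ σ₂ t *
      NormedSpace.exp (-(t • Bᵀ)) = -(B * condSecond B A x σ₁ σ₂ t) := by
    rw [condSecond_factor]
    simp only [neg_mul, mul_assoc]
  have hB : NormedSpace.exp (-(t • B)) *
      (NormedSpace.exp (t • B) * Gmat B A x σ₁ σ₂ t * NormedSpace.exp (t • Bᵀ)) *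
      NormedSpace.exp (-(t • Bᵀ)) = Gmat B A x σ₁ σ₂ t := by
    calc NormedSpace.exp (-(t • B)) *
        (NormedSpace.exp (t • B) * Gmat B A x σ₁ σ₂ t * NormedSpace.exp (t • Bᵀ)) *
        NormedSpace.exp (-(t • Bᵀ))
        = (NormedSpace.exp (-(t • B)) * NormedSpace.exp (t • B)) *
          (Gmat B A x σ₁ σ₂ t * (NormedSpace.exp (t • Bᵀ) * NormedSpace.exp (-(t • Bᵀ)))) := by
          simp only [mul_assoc]
      _ = Gmat B A x σ₁ σ₂ t := by
          rw [expNeg_mul_exp, exp_mul_expNeg, one_mul, mul_one]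
  have hC : NormedSpace.exp (-(t • B)) * Kmat B A x σ₁ σ₂ t *
      (NormedSpace.exp (-(t • Bᵀ)) * (-Bᵀ)) = -(condSecond B A x σ₁ σ₂ t * Bᵀ) := by
    rw [condSecond_factor]
    simp only [mul_neg, mul_assoc]
  have hD : (∑ k, ∑ l,
        ((((-B) * NormedSpace.exp (-(t • B))) i k * Kmat B A x σ₁ σ₂ t k l
          + NormedSpace.exp (-(t • B)) i k *
            (NormedSpace.exp (t • B) * Gmat B A x σ₁ σ₂ t * NormedSpace.exp (t • Bᵀ)) k l)
            * NormedSpace.exp (-(t • Bᵀ)) l j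
          + NormedSpace.exp (-(t • B)) i k * Kmat B A x σ₁ σ₂ t k l *
            (NormedSpace.exp (-(t • Bᵀ)) * (-Bᵀ)) l j))
      = (Gmat B A x σ₁ σ₂ t
        - (B * condSecond B A x σ₁ σ₂ t + condSecond B A x σ₁ σ₂ t * Bᵀ)) i j := by
    have step1 : (∑ k, ∑ l,
        ((((-B) * NormedSpace.exp (-(t • B))) i k * Kmat B A x σ₁ σ₂ t k l
          + NormedSpace.exp (-(t • B)) i k *
            (NormedSpace.exp (t • B) * Gmat B A x σ₁ σ₂ t * NormedSpace.exp (t • Bᵀ)) k l)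
            * NormedSpace.exp (-(t • Bᵀ)) l j
          + NormedSpace.exp (-(t • B)) i k * Kmat B A x σ₁ σ₂ t k l *
            (NormedSpace.exp (-(t • Bᵀ)) * (-Bᵀ)) l j))
        = (∑ k, ∑ l, ((-B) * NormedSpace.exp (-(t • B))) i k * Kmat B A x σ₁ σ₂ t k l *
            NormedSpace.exp (-(t • Bᵀ)) l j)
          + ((∑ k, ∑ l, NormedSpace.exp (-(t • B)) i k *
              (NormedSpace.exp (t • B) * Gmat B A x σ₁ σ₂ t * NormedSpace.exp (t • Bᵀ)) k l *
              NormedSpace.exp (-(t • Bᵀ)) l j)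
            + (∑ k, ∑ l, NormedSpace.exp (-(t • B)) i k * Kmat B A x σ₁ σ₂ t k l *
              (NormedSpace.exp (-(t • Bᵀ)) * (-Bᵀ)) l j)) := by
      simp only [← Finset.sum_add_distrib]
      exact Finset.sum_congr rfl fun k _ => Finset.sum_congr rfl fun l _ => by ring
    rw [step1, ← mul3_apply, ← mul3_apply, ← mul3_apply, hA, hB, hC]
    simp only [Matrix.sub_apply, Matrix.add_apply, Matrix.neg_apply]
    ring
  rw [hD] at hsum
  refine hsum.congr_of_eventuallyEq (Filter.Eventually.of_forall fun u => ?_)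
  show condSecond B A x σ₁ σ₂ u i j = _
  rw [condSecond_factor]
  exact mul3_apply _ _ _ i j

lemma condSecond_entry_hasDerivAt' (B : Matrix (Fin 2) (Fin 2) ℝ) (A x : Fin 2 → ℝ)
    (σ₁ σ₂ : ℝ) (t : ℝ) (i j : Fin 2) :
    HasDerivAt (fun u => condSecond B A x σ₁ σ₂ u i j)
      ((vecMulVec (condMean B A x t) A + vecMulVec A (condMean B A x t)
        - (B * condSecond B A x σ₁ σ₂ t + condSecond B A x σ₁ σ₂ t * Bᵀ)
        + Dmat σ₁ σ₂ (condMean B A x t)) i j) t := by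
  have h := condSecond_entry_hasDerivAt B A x σ₁ σ₂ t i j
  have heq : (Gmat B A x σ₁ σ₂ t
        - (B * condSecond B A x σ₁ σ₂ t + condSecond B A x σ₁ σ₂ t * Bᵀ)) i j
      = (vecMulVec (condMean B A x t) A + vecMulVec A (condMean B A x t)
        - (B * condSecond B A x σ₁ σ₂ t + condSecond B A x σ₁ σ₂ t * Bᵀ)
        + Dmat σ₁ σ₂ (condMean B A x t)) i j := by
    simp only [Gmat, Matrix.sub_apply, Matrix.add_apply]
    ring
  rwa [heq] at h

/-- `h(0) = xxᵀ`, `h` is differentiable with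
`h'(t) = f(t)Aᵀ + Af(t)ᵀ − Bh(t) − h(t)Bᵀ + D(f(t))` for `t ≥ 0`; equivalently
`h` satisfies the corresponding integral equation. -/
theorem condSecond_ode (B : Matrix (Fin 2) (Fin 2) ℝ) (A x : Fin 2 → ℝ) (σ₁ σ₂ : ℝ) :
    condSecond B A x σ₁ σ₂ 0 = vecMulVec x x ∧
    (∀ t : ℝ, 0 ≤ t → ∀ i j : Fin 2,
      HasDerivAt (fun u => condSecond B A x σ₁ σ₂ u i j)
        ((vecMulVec (condMean B A x t) A + vecMulVec A (condMean B A x t)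
          - (B * condSecond B A x σ₁ σ₂ t + condSecond B A x σ₁ σ₂ t * Bᵀ)
          + Dmat σ₁ σ₂ (condMean B A x t)) i j) t) ∧
    (∀ t : ℝ, 0 ≤ t → ∀ i j : Fin 2,
      condSecond B A x σ₁ σ₂ t i j
        = vecMulVec x x i j
          + ∫ s in (0:ℝ)..t,
              (vecMulVec (condMean B A x s) A + vecMulVec A (condMean B A x s)
                - (B * condSecond B A x σ₁ σ₂ s + condSecond B A x σ₁ σ₂ s * Bᵀ)
                + Dmat σ₁ σ₂ (condMean B A x s)) i j) := by
  refine ⟨condSecond_zero B A x σ₁ σ₂,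
    fun t _ i j => condSecond_entry_hasDerivAt' B A x σ₁ σ₂ t i j, fun t _ i j => ?_⟩
  have hh : ∀ k l : Fin 2, Continuous fun s : ℝ => condSecond B A x σ₁ σ₂ s k l := fun k l =>
    continuous_iff_continuousAt.2 fun s =>
      (condSecond_entry_hasDerivAt B A x σ₁ σ₂ s k l).continuousAt
  have hint : IntervalIntegrable
      (fun s => (vecMulVec (condMean B A x s) A + vecMulVec A (condMean B A x s)
        - (B * condSecond B A x σ₁ σ₂ s + condSecond B A x σ₁ σ₂ s * Bᵀ)
        + Dmat σ₁ σ₂ (condMean B A x s)) i j) MeasureTheory.volume 0 t := by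
    have hfun : (fun s => (vecMulVec (condMean B A x s) A + vecMulVec A (condMean B A x s)
        - (B * condSecond B A x σ₁ σ₂ s + condSecond B A x σ₁ σ₂ s * Bᵀ)
        + Dmat σ₁ σ₂ (condMean B A x s)) i j)
        = fun s => Gmat B A x σ₁ σ₂ s i j
          - ((∑ k, B i k * condSecond B A x σ₁ σ₂ s k j)
            + (∑ k, condSecond B A x σ₁ σ₂ s i k * Bᵀ k j)) := by
      funext s
      simp only [Gmat, Matrix.sub_apply, Matrix.add_apply, Matrix.mul_apply]
      ring
    rw [hfun]
    exact ((Gmat_entry_cont B A x σ₁ σ₂ i j).sub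
      ((continuous_finset_sum _ fun k _ => continuous_const.mul (hh k j)).add
        (continuous_finset_sum _ fun k _ => (hh i k).mul continuous_const))).intervalIntegrable
      0 t
  have hftc := intervalIntegral.integral_eq_sub_of_hasDerivAt
    (fun s _ => condSecond_entry_hasDerivAt' B A x σ₁ σ₂ s i j) hint
  rw [condSecond_zero] at hftc
  linarith

end
end
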